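/- Let X be a Banach space, T = {T(t,s) : t ≥ s > a₀} an evolution family on X, h : (a₀,∞) → (0,∞) a growth rate, a₀* > a₀, and J = [a₀*,∞). Then T admits an h-dichotomy on J if and only if the rescaled family T^h, given by T_h(t,s) := T(h⁻¹(eᵗ), h⁻¹(eˢ)), admits an exponential dichotomy (i.e., an h-dichotomy with h(t) = eᵗ) on [ln h(a₀*), ∞). Moreover, if P(t), t ∈ J, are the projections of the h-dichotomy of T, then P̃(t) := P(h⁻¹(eᵗ)) are projections of the exponential dichotomy of T^h. -/

import Mathlib

open Set Real

noncomputable section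

variable {X : Type*} [NormedAddCommGroup X] [NormedSpace ℝ X] [CompleteSpace X]

/-- An evolution family on `X` with parameter `a₀ ∈ ℝ ∪ {-∞}` (modelled as `EReal`):
`T t t = Id` for `t > a₀`; `T t s ∘ T s r = T t r` for `t ≥ s ≥ r > a₀`; and for every
`s > a₀` and `v ∈ X`, the map `t ↦ T t s v` is continuous on `[s, ∞)`. -/
def IsEvolutionFamily (a₀ : EReal) (T : ℝ → ℝ → X →L[ℝ] X) : Prop :=
  (∀ t : ℝ, a₀ < (t : EReal) → T t t = ContinuousLinearMap.id ℝ X) ∧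
  (∀ t s r : ℝ, a₀ < (r : EReal) → r ≤ s → s ≤ t → (T t s).comp (T s r) = T t r) ∧
  (∀ s : ℝ, a₀ < (s : EReal) → ∀ v : X, ContinuousOn (fun t => T t s v) (Set.Ici s))

/-- A growth rate: a bijective increasing map from `(a₀, ∞)` onto `(0, ∞)`. -/
def IsGrowthRate (a₀ : EReal) (h : ℝ → ℝ) : Prop :=
  StrictMonoOn h {t : ℝ | a₀ < (t : EReal)} ∧
  Set.BijOn h {t : ℝ | a₀ < (t : EReal)} (Set.Ioi (0 : ℝ))

/-- The family of projections `P` with constants `D, lam` witnesses an `h`-dichotomy of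
the evolution family `T` on the interval `J`:
(1) `P t` are (bounded) projections, commuting with the evolution family, and `T t s`
restricted to `Ker P s` is a bijection onto `Ker P t` for `t ≥ s` in `J`;
(2) `‖T t s ∘ P s‖ ≤ D (h t / h s)^(-lam)` for `t ≥ s` in `J`;
(3) for `t ≤ s` in `J`, the inverse `T t s : Ker P s → Ker P t` of
`T s t |_{Ker P t}` satisfies `‖T t s (Id - P s)‖ ≤ D (h s / h t)^(-lam)`; pointwise:
whenever `w ∈ Ker P t` satisfies `T s t w = (Id - P s) v`, then
`‖w‖ ≤ D (h s / h t)^(-lam) ‖v‖`. -/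
def HDichotomyProjWith (h : ℝ → ℝ) (T : ℝ → ℝ → X →L[ℝ] X) (J : Set ℝ)
    (P : ℝ → X →L[ℝ] X) (D lam : ℝ) : Prop :=
  (∀ t ∈ J, (P t).comp (P t) = P t) ∧
  (∀ t ∈ J, ∀ s ∈ J, s ≤ t → (P t).comp (T t s) = (T t s).comp (P s)) ∧
  (∀ t ∈ J, ∀ s ∈ J, s ≤ t →
    Set.BijOn (T t s) (LinearMap.ker (P s : X →ₗ[ℝ] X) : Set X) (LinearMap.ker (P t : X →ₗ[ℝ] X) : Set X)) ∧
  (∀ t ∈ J, ∀ s ∈ J, s ≤ t → ‖(T t s).comp (P s)‖ ≤ D * (h t / h s) ^ (-lam)) ∧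
  (∀ t ∈ J, ∀ s ∈ J, t ≤ s → ∀ v w : X, w ∈ LinearMap.ker (P t : X →ₗ[ℝ] X) →
    T s t w = v - P s v → ‖w‖ ≤ D * (h s / h t) ^ (-lam) * ‖v‖)

/-- `T` admits an `h`-dichotomy on `J`. -/
def HDichotomyOn (h : ℝ → ℝ) (T : ℝ → ℝ → X →L[ℝ] X) (J : Set ℝ) : Prop :=
  ∃ (P : ℝ → X →L[ℝ] X) (D lam : ℝ), 0 < D ∧ 0 < lam ∧ HDichotomyProjWith h T J P D lam

/-- `T` admits an `h`-dichotomy on `[a₀*, ∞)` iff the rescaled family `T_h`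
admits an exponential dichotomy (an `h`-dichotomy with `h = exp`) on `[ln h(a₀*), ∞)`;
moreover, if `P t`, `t ∈ [a₀*, ∞)`, are projections of the `h`-dichotomy of `T` with
constants `D, lam`, then `P̃ t := P (h⁻¹ (e^t))` are projections of the exponential
dichotomy of `T_h` (with the same constants). -/
theorem hDichotomy_iff_rescaled_expDichotomy
    (a₀ : EReal) (T : ℝ → ℝ → X →L[ℝ] X) (h hinv : ℝ → ℝ) (astar : ℝ)
    (hT : IsEvolutionFamily a₀ T)
    (hh : IsGrowthRate a₀ h)
    (hinv_spec : Set.InvOn hinv h {t : ℝ | a₀ < (t : EReal)} (Set.Ioi (0 : ℝ)))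
    (hinv_maps : Set.MapsTo hinv (Set.Ioi (0 : ℝ)) {t : ℝ | a₀ < (t : EReal)})
    (hastar : a₀ < (astar : EReal)) :
    (HDichotomyOn h T (Set.Ici astar) ↔
      HDichotomyOn Real.exp (fun t s => T (hinv (Real.exp t)) (hinv (Real.exp s)))
        (Set.Ici (Real.log (h astar)))) ∧
    (∀ (P : ℝ → X →L[ℝ] X) (D lam : ℝ), 0 < D → 0 < lam →
      HDichotomyProjWith h T (Set.Ici astar) P D lam →
      HDichotomyProjWith Real.exp (fun t s => T (hinv (Real.exp t)) (hinv (Real.exp s)))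
        (Set.Ici (Real.log (h astar))) (fun t => P (hinv (Real.exp t))) D lam) := by

  classical
  set S := {t : ℝ | a₀ < (t : EReal)} with hSdef
  have hpos : ∀ t ∈ S, 0 < h t := fun t ht => hh.2.1 ht
  have hleft : ∀ t ∈ S, hinv (h t) = t := fun t ht => hinv_spec.1 ht
  have hright : ∀ x ∈ Set.Ioi (0:ℝ), h (hinv x) = x := fun x hx => hinv_spec.2 hx
  have hinv_mono : ∀ x y : ℝ, 0 < x → x ≤ y → hinv x ≤ hinv y := by
    intro x y hx hxy
    by_contra hc
    push_neg at hc
    have h1 := hh.1 (hinv_maps (show y ∈ Set.Ioi (0:ℝ) from lt_of_lt_of_le hx hxy))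
      (hinv_maps (show x ∈ Set.Ioi (0:ℝ) from hx)) hc
    rw [hright x hx, hright y (lt_of_lt_of_le hx hxy)] at h1
    linarith
  have hS : ∀ t, astar ≤ t → t ∈ S := fun t ht =>
    lt_of_lt_of_le hastar (EReal.coe_le_coe_iff.mpr ht)
  have haS : astar ∈ S := hastar
  have hpa : 0 < h astar := hpos astar haS
  have fwdmem : ∀ t, Real.log (h astar) ≤ t → astar ≤ hinv (Real.exp t) := by
    intro t ht
    have h2 : h astar ≤ Real.exp t := by
      calc h astar = Real.exp (Real.log (h astar)) := (Real.exp_log hpa).symm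
        _ ≤ Real.exp t := Real.exp_le_exp.mpr ht
    calc astar = hinv (h astar) := (hleft astar haS).symm
      _ ≤ hinv (Real.exp t) := hinv_mono _ _ hpa h2
  have fwd_exp : ∀ t : ℝ, h (hinv (Real.exp t)) = Real.exp t :=
    fun t => hright _ (Real.exp_pos t)
  have fwd_le : ∀ s t : ℝ, s ≤ t → hinv (Real.exp s) ≤ hinv (Real.exp t) :=
    fun s t hst => hinv_mono _ _ (Real.exp_pos s) (Real.exp_le_exp.mpr hst)
  have bwdmem : ∀ t, astar ≤ t → Real.log (h astar) ≤ Real.log (h t) := by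
    intro t ht
    exact Real.log_le_log hpa (hh.1.monotoneOn haS (hS t ht) ht)
  have bwd_pt : ∀ t, astar ≤ t → hinv (Real.exp (Real.log (h t))) = t := by
    intro t ht
    rw [Real.exp_log (hpos t (hS t ht)), hleft t (hS t ht)]
  have bwd_le : ∀ s t, astar ≤ s → s ≤ t → Real.log (h s) ≤ Real.log (h t) := by
    intro s t hs hst
    exact Real.log_le_log (hpos s (hS s hs)) (hh.1.monotoneOn (hS s hs) (hS t (hs.trans hst)) hst)
  have FWD : ∀ (P : ℝ → X →L[ℝ] X) (D lam : ℝ),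
      HDichotomyProjWith h T (Set.Ici astar) P D lam →
      HDichotomyProjWith Real.exp (fun t s => T (hinv (Real.exp t)) (hinv (Real.exp s)))
        (Set.Ici (Real.log (h astar))) (fun t => P (hinv (Real.exp t))) D lam := by
    rintro P D lam ⟨c1, c2, c3, c4, c5⟩
    refine ⟨?_, ?_, ?_, ?_, ?_⟩
    · intro t ht
      exact c1 _ (fwdmem t ht)
    · intro t ht s hs hst
      exact c2 _ (fwdmem t ht) _ (fwdmem s hs) (fwd_le s t hst)
    · intro t ht s hs hst
      exact c3 _ (fwdmem t ht) _ (fwdmem s hs) (fwd_le s t hst)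
    · intro t ht s hs hst
      have h1 := c4 _ (fwdmem t ht) _ (fwdmem s hs) (fwd_le s t hst)
      rwa [fwd_exp t, fwd_exp s] at h1
    · intro t ht s hs hts v w hw heq
      have h1 := c5 _ (fwdmem t ht) _ (fwdmem s hs) (fwd_le t s hts) v w hw heq
      rwa [fwd_exp s, fwd_exp t] at h1
  have BWD : ∀ (P : ℝ → X →L[ℝ] X) (D lam : ℝ),
      HDichotomyProjWith Real.exp (fun t s => T (hinv (Real.exp t)) (hinv (Real.exp s)))
        (Set.Ici (Real.log (h astar))) P D lam →
      HDichotomyProjWith h T (Set.Ici astar) (fun t => P (Real.log (h t))) D lam := by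
    rintro P D lam ⟨c1, c2, c3, c4, c5⟩
    refine ⟨?_, ?_, ?_, ?_, ?_⟩
    · intro t ht
      exact c1 _ (bwdmem t ht)
    · intro t ht s hs hst
      have h1 := c2 _ (bwdmem t ht) _ (bwdmem s hs) (bwd_le s t hs hst)
      simp only [bwd_pt t ht, bwd_pt s hs] at h1
      exact h1
    · intro t ht s hs hst
      have h1 := c3 _ (bwdmem t ht) _ (bwdmem s hs) (bwd_le s t hs hst)
      simp only [bwd_pt t ht, bwd_pt s hs] at h1
      exact h1
    · intro t ht s hs hst
      have h1 := c4 _ (bwdmem t ht) _ (bwdmem s hs) (bwd_le s t hs hst)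
      simp only [bwd_pt t ht, bwd_pt s hs, Real.exp_log (hpos t (hS t ht)),
        Real.exp_log (hpos s (hS s hs)), hleft t (hS t ht), hleft s (hS s hs)] at h1
      exact h1
    · intro t ht s hs hts v w hw heq
      have h1 := c5 _ (bwdmem t ht) _ (bwdmem s hs) (bwd_le t s ht hts) v w ?_ ?_
      · simp only [Real.exp_log (hpos t (hS t ht)), Real.exp_log (hpos s (hS s hs)),
          hleft t (hS t ht), hleft s (hS s hs)] at h1
        exact h1
      · exact hw
      · simp only [bwd_pt t ht, bwd_pt s hs]
        exact heq
  refine ⟨⟨?_, ?_⟩, ?_⟩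
  · rintro ⟨P, D, lam, hD, hlam, hP⟩
    exact ⟨_, D, lam, hD, hlam, FWD P D lam hP⟩
  · rintro ⟨P, D, lam, hD, hlam, hP⟩
    exact ⟨_, D, lam, hD, hlam, BWD P D lam hP⟩
  · intro P D lam hD hlam hP
    exact FWD P D lam hP
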